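/- Let M be the 0/1 adjacency matrix of a directed graph on N vertices. Then Tr[(I + M)^N] = N if and only if the graph has no directed cycles, and in that case (I + M)^N has (i,j)-entry equal to Σ_{k=0}^{N−1} C(N,k) · (number of directed walks of length k from i to j). -/

import Mathlib

open Classical

noncomputable def wcount {N : ℕ} (G : Fin N → Fin N → Prop) (k : ℕ) (i j : Fin N) : ℕ :=
  (Finset.univ.filter (fun p : Fin (k + 1) → Fin N =>
    p 0 = i ∧ p (Fin.last k) = j ∧ ∀ m : Fin k, G (p m.castSucc) (p m.succ))).card

lemma wcount_succ {N : ℕ} (G : Fin N → Fin N → Prop) (k : ℕ) (i j : Fin N) :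
    wcount G (k + 1) i j = ∑ l : Fin N, if G l j then wcount G k i l else 0 := by
  have key : wcount G (k + 1) i j =
      (Finset.univ.sigma (fun l : Fin N => Finset.univ.filter
        (fun q : Fin (k + 1) → Fin N => (q 0 = i ∧ q (Fin.last k) = l ∧
          ∀ m : Fin k, G (q m.castSucc) (q m.succ)) ∧ G l j))).card := by
    refine Finset.card_bij'
      (fun p _ => ⟨p (Fin.last k).castSucc, fun m => p m.castSucc⟩)
      (fun x _ => Fin.snoc x.2 j) ?_ ?_ ?_ ?_
    · intro p hp
      simp only [Finset.mem_filter, Finset.mem_univ, true_and] at hp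
      obtain ⟨h0, hl, he⟩ := hp
      simp only [Finset.mem_sigma, Finset.mem_univ, Finset.mem_filter, true_and]
      refine ⟨⟨?_, fun m => ?_⟩, ?_⟩
      · simpa using h0
      · have := he m.castSucc
        rwa [Fin.succ_castSucc] at this
      · have := he (Fin.last k)
        rwa [Fin.succ_last, hl] at this
    · intro x hx
      simp only [Finset.mem_sigma, Finset.mem_univ, Finset.mem_filter, true_and] at hx
      obtain ⟨⟨h0, hl, he⟩, hG⟩ := hx
      simp only [Finset.mem_filter, Finset.mem_univ, true_and]
      refine ⟨?_, ?_, fun m => ?_⟩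
      · rw [show (0 : Fin (k + 2)) = Fin.castSucc 0 by simp, Fin.snoc_castSucc]; exact h0
      · rw [Fin.snoc_last]
      · induction m using Fin.lastCases with
        | last =>
          rw [Fin.succ_last, Fin.snoc_last, Fin.snoc_castSucc, hl]; exact hG
        | cast m' =>
          rw [Fin.succ_castSucc, Fin.snoc_castSucc, Fin.snoc_castSucc]
          exact he m'
    · intro p hp
      simp only [Finset.mem_filter, Finset.mem_univ, true_and] at hp
      funext m
      induction m using Fin.lastCases with
      | last => simp only [Fin.snoc_last]; rw [hp.2.1]
      | cast m' => simp only [Fin.snoc_castSucc]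
    · intro x hx
      simp only [Finset.mem_sigma, Finset.mem_univ, Finset.mem_filter, true_and] at hx
      refine Sigma.ext ?_ (heq_of_eq ?_)
      · simp only [Fin.snoc_castSucc]; exact hx.1.2.1
      · funext m; simp only [Fin.snoc_castSucc]
  rw [key, Finset.card_sigma]
  refine Finset.sum_congr rfl fun l _ => ?_
  by_cases hG : G l j
  · rw [if_pos hG]
    unfold wcount
    congr 1
    apply Finset.filter_congr
    intro q _
    simp [hG]
  · rw [if_neg hG]
    rw [Finset.card_eq_zero]
    ext q
    simp only [Finset.mem_filter, Finset.mem_univ, true_and, Finset.notMem_empty, iff_false]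
    rintro ⟨-, h⟩
    exact hG h

lemma pow_apply_eq {N : ℕ} (G : Fin N → Fin N → Prop) (M : Matrix (Fin N) (Fin N) ℝ)
    (hM : ∀ i j, M i j = if G i j then 1 else 0) :
    ∀ (k : ℕ) (i j : Fin N), (M ^ k) i j = (wcount G k i j : ℝ) := by
  intro k
  induction k with
  | zero =>
    intro i j
    rw [pow_zero]
    have hw : wcount G 0 i j = if i = j then 1 else 0 := by
      unfold wcount
      by_cases h : i = j
      · subst h
        rw [if_pos rfl, Finset.card_eq_one]
        refine ⟨fun _ => i, ?_⟩
        ext p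
        simp only [Finset.mem_filter, Finset.mem_univ, true_and, Finset.mem_singleton]
        constructor
        · rintro ⟨h0, -, -⟩
          funext x
          have hx : x = 0 := by omega
          rw [hx, h0]
        · rintro rfl
          exact ⟨rfl, rfl, fun m => m.elim0⟩
      · rw [if_neg h, Finset.card_eq_zero]
        ext p
        simp only [Finset.mem_filter, Finset.mem_univ, true_and, Finset.notMem_empty,
          iff_false, not_and]
        intro h0 hl
        rw [Fin.last_zero, h0] at hl
        exact absurd hl h
    rw [hw]
    simp [Matrix.one_apply]
  | succ k ih =>
    intro i j
    rw [pow_succ, Matrix.mul_apply, wcount_succ, Nat.cast_sum]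
    refine Finset.sum_congr rfl fun l _ => ?_
    rw [ih i l, hM l j]
    split_ifs with hG <;> simp

lemma cycle_of_repeat {N : ℕ} (G : Fin N → Fin N → Prop) {k : ℕ} (p : Fin (k + 1) → Fin N)
    (hp : ∀ m : Fin k, G (p m.castSucc) (p m.succ))
    (a b : Fin (k + 1)) (hab : a < b) (heq : p a = p b) :
    ∃ k', 1 ≤ k' ∧ k' ≤ k ∧ ∃ q : ℕ → Fin N, q k' = q 0 ∧ ∀ m < k', G (q m) (q (m + 1)) := by
  have hb : b.val ≤ k := Nat.lt_succ_iff.mp b.isLt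
  have hab' : a.val < b.val := hab
  refine ⟨b.val - a.val, by omega, by omega,
    fun m => p ⟨min (a.val + m) k, by omega⟩, ?_, ?_⟩
  · have h1 : min (a.val + (b.val - a.val)) k = b.val := by omega
    have h2 : min (a.val + 0) k = a.val := by omega
    simp only [h1, h2]
    rw [show (⟨b.val, by omega⟩ : Fin (k + 1)) = b from Fin.eta b _,
      show (⟨a.val, by omega⟩ : Fin (k + 1)) = a from Fin.eta a _, heq]
  · intro m hm
    have h1 : min (a.val + m) k = a.val + m := by omega
    have h2 : min (a.val + (m + 1)) k = a.val + m + 1 := by omega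
    simp only [h1, h2]
    have := hp ⟨a.val + m, by omega⟩
    simpa [Fin.castSucc, Fin.succ, Fin.castAdd, Fin.castLE] using this

lemma wcount_diag_pos {N : ℕ} (G : Fin N → Fin N → Prop) {k : ℕ} (p : ℕ → Fin N)
    (hpk : p k = p 0) (he : ∀ m < k, G (p m) (p (m + 1))) :
    0 < wcount G k (p 0) (p 0) := by
  rw [wcount, Finset.card_pos]
  refine ⟨fun m => p m.val, ?_⟩
  simp only [Finset.mem_filter, Finset.mem_univ, true_and]
  refine ⟨rfl, ?_, fun m => ?_⟩
  · simp only [Fin.val_last]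
    exact hpk
  · simp only [Fin.coe_castSucc, Fin.val_succ]
    exact he m.val m.isLt

lemma exists_short_cycle {N : ℕ} {G : Fin N → Fin N → Prop}
    (h : ∃ k, 1 ≤ k ∧ ∃ p : ℕ → Fin N, p k = p 0 ∧ ∀ m < k, G (p m) (p (m + 1))) :
    ∃ k, 1 ≤ k ∧ k ≤ N ∧ ∃ p : ℕ → Fin N, p k = p 0 ∧ ∀ m < k, G (p m) (p (m + 1)) := by
  obtain ⟨k, hk, p, hpk, he⟩ := h
  by_cases hkN : k ≤ N
  · exact ⟨k, hk, hkN, p, hpk, he⟩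
  · push_neg at hkN
    set p' : Fin (N + 1) → Fin N := fun m => p m.val with hp'
    have hedge : ∀ m : Fin N, G (p' m.castSucc) (p' m.succ) := by
      intro m
      simp only [hp', Fin.coe_castSucc, Fin.val_succ]
      exact he m.val (by omega)
    obtain ⟨a, b, hne, heq⟩ := Fintype.exists_ne_map_eq_of_card_lt p' (by simp)
    rcases lt_or_gt_of_ne hne with hab | hab
    · obtain ⟨k', h1, h2, q, hq⟩ := cycle_of_repeat G p' hedge a b hab heq
      exact ⟨k', h1, h2, q, hq⟩
    · obtain ⟨k', h1, h2, q, hq⟩ := cycle_of_repeat G p' hedge b a hab heq.symm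
      exact ⟨k', h1, h2, q, hq⟩

lemma wcount_diag_zero {N : ℕ} {G : Fin N → Fin N → Prop}
    (hC : ¬ ∃ k, 1 ≤ k ∧ ∃ p : ℕ → Fin N, p k = p 0 ∧ ∀ m < k, G (p m) (p (m + 1)))
    {k : ℕ} (hk : 1 ≤ k) (i : Fin N) : wcount G k i i = 0 := by
  by_contra h
  rw [← Ne, ← Nat.pos_iff_ne_zero, wcount, Finset.card_pos] at h
  obtain ⟨p, hp⟩ := h
  simp only [Finset.mem_filter, Finset.mem_univ, true_and] at hp
  obtain ⟨h0, hl, he⟩ := hp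
  have hab : (0 : Fin (k + 1)) < Fin.last k := by
    rw [Fin.lt_iff_val_lt_val]
    simpa using (Nat.lt_of_lt_of_le Nat.zero_lt_one hk)
  obtain ⟨k', h1, h2, q, hq1, hq2⟩ :=
    cycle_of_repeat G p he 0 (Fin.last k) hab (by rw [h0, hl])
  exact hC ⟨k', h1, q, hq1, hq2⟩

lemma wcount_N_zero {N : ℕ} {G : Fin N → Fin N → Prop}
    (hC : ¬ ∃ k, 1 ≤ k ∧ ∃ p : ℕ → Fin N, p k = p 0 ∧ ∀ m < k, G (p m) (p (m + 1)))
    (i j : Fin N) : wcount G N i j = 0 := by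
  by_contra h
  rw [← Ne, ← Nat.pos_iff_ne_zero, wcount, Finset.card_pos] at h
  obtain ⟨p, hp⟩ := h
  simp only [Finset.mem_filter, Finset.mem_univ, true_and] at hp
  obtain ⟨a, b, hne, heq⟩ := Fintype.exists_ne_map_eq_of_card_lt p (by simp)
  rcases lt_or_gt_of_ne hne with hab | hab
  · obtain ⟨k', h1, h2, q, hq1, hq2⟩ := cycle_of_repeat G p hp.2.2 a b hab heq
    exact hC ⟨k', h1, q, hq1, hq2⟩
  · obtain ⟨k', h1, h2, q, hq1, hq2⟩ := cycle_of_repeat G p hp.2.2 b a hab heq.symm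
    exact hC ⟨k', h1, q, hq1, hq2⟩

lemma entry_expand {N : ℕ} (G : Fin N → Fin N → Prop) (M : Matrix (Fin N) (Fin N) ℝ)
    (hM : ∀ i j, M i j = if G i j then 1 else 0) (i j : Fin N) :
    ((1 + M) ^ N) i j = ∑ k ∈ Finset.range (N + 1), (N.choose k : ℝ) * (wcount G k i j : ℝ) := by
  have hexp : (1 + M) ^ N = ∑ k ∈ Finset.range (N + 1), (N.choose k : ℝ) • M ^ k := by
    rw [add_comm, (Commute.one_right M).add_pow]
    refine Finset.sum_congr rfl fun k _ => ?_
    rw [one_pow, mul_one, Nat.cast_smul_eq_nsmul, nsmul_eq_mul,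
      (Nat.cast_commute (N.choose k) (M ^ k)).eq]
  rw [hexp]
  simp only [Matrix.sum_apply, Matrix.smul_apply, smul_eq_mul]
  exact Finset.sum_congr rfl fun k _ => by rw [pow_apply_eq G M hM]

lemma trace_expand {N : ℕ} (G : Fin N → Fin N → Prop) (M : Matrix (Fin N) (Fin N) ℝ)
    (hM : ∀ i j, M i j = if G i j then 1 else 0) :
    Matrix.trace ((1 + M) ^ N) =
      ∑ k ∈ Finset.range (N + 1), (N.choose k : ℝ) * ∑ i, (wcount G k i i : ℝ) := by
  rw [Matrix.trace]
  simp only [Matrix.diag]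
  calc ∑ i, ((1 + M) ^ N) i i
      = ∑ i : Fin N, ∑ k ∈ Finset.range (N + 1), (N.choose k : ℝ) * (wcount G k i i : ℝ) :=
        Finset.sum_congr rfl fun i _ => entry_expand G M hM i i
    _ = ∑ k ∈ Finset.range (N + 1), ∑ i : Fin N, (N.choose k : ℝ) * (wcount G k i i : ℝ) :=
        Finset.sum_comm
    _ = _ := Finset.sum_congr rfl fun k _ => by rw [Finset.mul_sum]

open Classical in
/-- For the 0/1 adjacency matrix `M` of a digraph `G` on `N` vertices,
`Tr[(I + M)^N] = N` iff `G` is acyclic, in which case each `(i,j)` entry of `(I + M)^N`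
is `∑_{k=0}^{N-1} C(N,k) ·` (number of directed walks of length `k` from `i` to `j`). -/
theorem stmt_14 {N : ℕ} (G : Fin N → Fin N → Prop)
    (M : Matrix (Fin N) (Fin N) ℝ)
    (hM : ∀ i j, M i j = if G i j then 1 else 0) :
    (Matrix.trace ((1 + M) ^ N) = (N : ℝ) ↔
      ¬ ∃ k, 1 ≤ k ∧ ∃ p : ℕ → Fin N, p k = p 0 ∧ ∀ m < k, G (p m) (p (m + 1))) ∧
    ((¬ ∃ k, 1 ≤ k ∧ ∃ p : ℕ → Fin N, p k = p 0 ∧ ∀ m < k, G (p m) (p (m + 1))) →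
      ∀ i j, ((1 + M) ^ N) i j = ∑ k ∈ Finset.range N, (N.choose k : ℝ) *
        ((Finset.univ.filter (fun p : Fin (k + 1) → Fin N =>
          p 0 = i ∧ p (Fin.last k) = j ∧
            ∀ m : Fin k, G (p m.castSucc) (p m.succ))).card : ℝ)) := by
  set f : ℕ → ℝ := fun k => (N.choose k : ℝ) * ∑ i, (wcount G k i i : ℝ) with hf
  have htr : Matrix.trace ((1 + M) ^ N) = ∑ k ∈ Finset.range (N + 1), f k :=
    trace_expand G M hM
  have hf0 : f 0 = (N : ℝ) := by
    simp only [hf, Nat.choose_zero_right, Nat.cast_one, one_mul]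
    have h1 : ∀ i : Fin N, (wcount G 0 i i : ℝ) = 1 := fun i => by
      rw [← pow_apply_eq G M hM, pow_zero, Matrix.one_apply_eq]
    rw [Finset.sum_congr rfl fun i _ => h1 i]
    simp
  have htr2 : Matrix.trace ((1 + M) ^ N) = (N : ℝ) + ∑ k ∈ Finset.range N, f (k + 1) := by
    rw [htr, Finset.sum_range_succ', hf0, add_comm]
  have hnn : ∀ k ∈ Finset.range N, 0 ≤ f (k + 1) := by
    intro k _
    simp only [hf]
    positivity
  constructor
  · rw [htr2]
    constructor
    · intro h hcyc
      have hsum : ∑ k ∈ Finset.range N, f (k + 1) = 0 := by linarith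
      obtain ⟨k', h1, h2, q, hq1, hq2⟩ := exists_short_cycle hcyc
      have hw : 0 < wcount G k' (q 0) (q 0) := wcount_diag_pos G q hq1 hq2
      have hfk : f k' = 0 := by
        have h3 := (Finset.sum_eq_zero_iff_of_nonneg hnn).mp hsum (k' - 1)
          (by rw [Finset.mem_range]; omega)
        have hk'e : k' - 1 + 1 = k' := by omega
        rwa [hk'e] at h3
      have hpos : 0 < f k' := by
        refine mul_pos ?_ ?_
        · exact_mod_cast Nat.choose_pos h2
        · refine lt_of_lt_of_le ?_ (Finset.single_le_sum
            (f := fun i => (wcount G k' i i : ℝ)) (fun i _ => by positivity)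
            (Finset.mem_univ (q 0)))
          show (0:ℝ) < (wcount G k' (q 0) (q 0) : ℝ)
          exact_mod_cast hw
      linarith
    · intro hC
      have hz : ∀ k ∈ Finset.range N, f (k + 1) = 0 := by
        intro k _
        simp only [hf]
        have h1 : ∀ i : Fin N, wcount G (k + 1) i i = 0 := fun i =>
          wcount_diag_zero hC (by omega) i
        simp [h1]
      rw [Finset.sum_eq_zero hz, add_zero]
  · intro hC i j
    rw [entry_expand G M hM, Finset.sum_range_succ, wcount_N_zero hC i j]
    simp only [Nat.cast_zero, mul_zero, add_zero]
    rfl
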